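/- Let G be a group with the subgroup topology G^H determined by a subgroup H. Then G^H is totally disconnected if and only if H is the trivial subgroup. -/

import Mathlib

open Pointwise

/-- The subgroup topology on `G` determined by a collection `F` of subgroups:
generated by all left cosets of members of `F`. -/
def subgroupTopology {G : Type*} [Group G] (F : Set (Subgroup G)) : TopologicalSpace G :=
  TopologicalSpace.generateFrom {s | ∃ (g : G) (K : Subgroup G), K ∈ F ∧ s = g • (K : Set G)}

/-- A collection of subgroups is a neighbourhood family if any two members
contain a common member. -/
def IsNeighbourhoodFamily {G : Type*} [Group G] (F : Set (Subgroup G)) : Prop :=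
  ∀ K₁ ∈ F, ∀ K₂ ∈ F, ∃ S ∈ F, S ≤ K₁ ⊓ K₂

/-- The subgroup topology `G^H` determined by a subgroup `H`: generated by all
left cosets of subgroups containing `H`. -/
def subgroupTopologyOf {G : Type*} [Group G] (H : Subgroup G) : TopologicalSpace G :=
  subgroupTopology {K | H ≤ K}

lemma subgroupTopologyOf_open_smul {G : Type*} [Group G] (H : Subgroup G) {U : Set G}
    (hU : (subgroupTopologyOf H).IsOpen U) : ∀ x ∈ U, x • (H : Set G) ⊆ U := by
  induction hU with
  | basic s hs =>
      obtain ⟨g, K, hK, rfl⟩ := hs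
      rintro x hx _ ⟨h, hh, rfl⟩
      obtain ⟨k, hk, rfl⟩ := hx
      exact ⟨k * h, K.mul_mem hk (hK hh), by simp [mul_assoc]⟩
  | univ => intro x _ _ _; trivial
  | inter s t _ _ ihs iht =>
      intro x hx y hy
      exact ⟨ihs x hx.1 hy, iht x hx.2 hy⟩
  | sUnion S _ ih =>
      rintro x ⟨s, hs, hx⟩ y hy
      exact ⟨s, hs, ih s hs x hx hy⟩

lemma subgroupTopologyOf_open_subset {G : Type*} [Group G] (H : Subgroup G) {U : Set G}
    (hU : (subgroupTopologyOf H).IsOpen U) {x : G} (hxH : x ∈ H) (hxU : x ∈ U) :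
    (H : Set G) ⊆ U := by
  have h1 : x • (H : Set G) = (H : Set G) := by
    ext y
    constructor
    · rintro ⟨h, hh, rfl⟩; exact H.mul_mem hxH hh
    · intro hy; exact ⟨x⁻¹ * y, H.mul_mem (H.inv_mem hxH) hy, by simp⟩
  rw [← h1]
  exact subgroupTopologyOf_open_smul H hU x hxU

theorem subgroupTopologyOf_totallyDisconnected_iff {G : Type*} [Group G] (H : Subgroup G) :
    @TotallyDisconnectedSpace G (subgroupTopologyOf H) ↔ H = ⊥ := by
  letI := subgroupTopologyOf H
  constructor
  · intro htd
    -- H as a set is preconnected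
    have hpc : IsPreconnected (H : Set G) := by
      intro u v hu hv _ ⟨x, hxH, hxu⟩ ⟨y, hyH, _⟩
      exact ⟨x, hxH, hxu, subgroupTopologyOf_open_subset H hv hyH ‹y ∈ v› hxH⟩
    have hsub : (H : Set G).Subsingleton :=
      htd.isTotallyDisconnected_univ (H : Set G) (Set.subset_univ _) hpc
    ext x
    simp only [Subgroup.mem_bot]
    exact ⟨fun hx => hsub hx H.one_mem, fun hx => hx ▸ H.one_mem⟩
  · rintro rfl
    have : DiscreteTopology G := by
      rw [discreteTopology_iff_isOpen_singleton]
      intro g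
      have : ({g} : Set G) = g • ((⊥ : Subgroup G) : Set G) := by
        simp [Subgroup.coe_bot, Set.smul_set_singleton]
      rw [this]
      exact TopologicalSpace.GenerateOpen.basic _ ⟨g, ⊥, (bot_le : (⊥ : Subgroup G) ≤ ⊥), rfl⟩
    exact inferInstance
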